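/- Let r ≥ 1 be an integer and let A = Σ_{i ≥ −r} A_i·z^i ∈ z^{−r}·gl_n(k[[z]]) be such that A_{−r} ∈ gl_n(k) is diagonal with n pairwise distinct diagonal entries. Then there exists p ∈ GL_n(k[[z]]) with p ≡ I_n (mod z) such that p·A := p·A·p^{-1} − τ(p)·p^{-1} equals Σ_{i=−r}^{0} D_i·z^i with every D_i ∈ gl_n(k) diagonal and D_{−r} = A_{−r}. -/

import Mathlib

noncomputable section

open Polynomial Matrix

variable {k : Type*} [Field k]

/-- The derivation `τ = z·d/dz` on `k((z))`, acting coefficientwise by `n`. -/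
def tauF (f : LaurentSeries k) : LaurentSeries k :=
  ⟨fun n => (n : k) * f.coeff n,
    f.isPWO_support'.mono (fun n hn => by
      simp only [Function.mem_support, ne_eq] at hn ⊢
      exact fun h => hn (by rw [h, mul_zero]))⟩

@[simp] lemma tauF_coeff (f : LaurentSeries k) (m : ℤ) :
    (tauF f).coeff m = (m : k) * f.coeff m := rfl

/-- `z d/dz` on power series. -/
def Tpow (f : PowerSeries k) : PowerSeries k :=
  PowerSeries.mk fun m => (m : k) * PowerSeries.coeff m f

@[simp] lemma coeff_Tpow (f : PowerSeries k) (m : ℕ) :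
    PowerSeries.coeff m (Tpow f) = (m : k) * PowerSeries.coeff m f :=
  PowerSeries.coeff_mk _ _

lemma Tpow_mul (f g : PowerSeries k) :
    Tpow (f * g) = Tpow f * g + f * Tpow g := by
  ext m
  rw [coeff_Tpow, map_add, PowerSeries.coeff_mul, PowerSeries.coeff_mul, PowerSeries.coeff_mul,
    Finset.mul_sum, ← Finset.sum_add_distrib]
  refine Finset.sum_congr rfl fun x hx => ?_
  have h := Finset.HasAntidiagonal.mem_antidiagonal.mp hx
  rw [coeff_Tpow, coeff_Tpow]
  have : ((m : k)) = ((x.1 : k) + (x.2 : k)) := by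
    rw [← Nat.cast_add, h]
  rw [this]; ring

lemma ofPS_coeff (f : PowerSeries k) (m : ℤ) :
    (HahnSeries.ofPowerSeries ℤ k f).coeff m =
      if 0 ≤ m then PowerSeries.coeff m.toNat f else 0 := by
  split_ifs with h
  · conv_lhs => rw [← Int.toNat_of_nonneg h]
    exact HahnSeries.ofPowerSeries_apply_coeff f m.toNat
  · rw [HahnSeries.ofPowerSeries_apply]
    apply HahnSeries.embDomain_notin_range
    simp only [Set.mem_range, Function.Embedding.coeFn_mk]
    rintro ⟨y, hy⟩
    have : ((y:ℤ)) = m := hy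
    omega

lemma tauF_ofPS (f : PowerSeries k) :
    tauF (HahnSeries.ofPowerSeries ℤ k f) = HahnSeries.ofPowerSeries ℤ k (Tpow f) := by
  ext m
  rw [tauF_coeff, ofPS_coeff, ofPS_coeff]
  split_ifs with h
  · rw [coeff_Tpow]
    congr 1
    have h2 : ((m.toNat : ℤ)) = m := Int.toNat_of_nonneg h
    exact_mod_cast (congrArg (fun z : ℤ => (z : k)) h2).symm

  · rw [mul_zero]

lemma single_mul_coeff (x : LaurentSeries k) (r : ℕ) (m : ℤ) :
    (HahnSeries.single (-(r:ℤ)) (1:k) * x).coeff m = x.coeff (m + r) := by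
  conv_lhs => rw [show m = (m + r) + (-(r:ℤ)) by ring]
  rw [HahnSeries.coeff_single_mul_add, one_mul]

lemma single_mul_X_pow (r : ℕ) :
    (HahnSeries.single (-(r:ℤ)) (1:k)) * HahnSeries.ofPowerSeries ℤ k (PowerSeries.X ^ r) = 1 := by
  rw [HahnSeries.ofPowerSeries_X_pow, HahnSeries.single_mul_single, neg_add_cancel, one_mul]
  rfl


section Rec

variable {k : Type*} [Field k] {n : ℕ} (r : ℕ) (a : Fin n → k) (Ac : ℕ → Matrix (Fin n) (Fin n) k)

/-- Simultaneous recursion producing the gauge coefficients `Q s` and the diagonal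
coefficients `β s`. -/
def QB : ℕ → Matrix (Fin n) (Fin n) k × (Fin n → k)
  | 0 => (1, a)
  | (s+1) =>
    let M : Matrix (Fin n) (Fin n) k :=
      (∑ j ∈ (Finset.range (s+1)).attach, (QB (j:ℕ)).1 * Ac (s+1-(j:ℕ)))
      - (∑ t ∈ (Finset.range s).attach,
          Matrix.diagonal ((QB ((t:ℕ)+1)).2) * (QB (s-(t:ℕ))).1)
      - (if r ≤ s+1 then ((s+1-r : ℕ) : k) • (QB (s-(r-1))).1 else 0)
    (Matrix.of (fun i j => if i = j then 0 else M i j / (a i - a j)), fun i => M i i)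
  termination_by s => s
  decreasing_by
  · have := j.2; simp only [Finset.mem_range] at this; omega
  · have := t.2; simp only [Finset.mem_range] at this; omega
  · have := t.2; simp only [Finset.mem_range] at this; omega
  · omega

def Q (s : ℕ) : Matrix (Fin n) (Fin n) k := (QB r a Ac s).1

def β (s : ℕ) : Fin n → k := (QB r a Ac s).2

def Mdef (s : ℕ) : Matrix (Fin n) (Fin n) k :=
  (∑ j ∈ Finset.range (s+1), Q r a Ac j * Ac (s+1-j))
  - (∑ t ∈ Finset.range s, Matrix.diagonal (β r a Ac (t+1)) * Q r a Ac (s-t))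
  - (if r ≤ s+1 then ((s+1-r : ℕ) : k) • Q r a Ac (s-(r-1)) else 0)

lemma QB_zero : QB r a Ac 0 = (1, a) := by rw [QB]

lemma Q_zero : Q r a Ac 0 = 1 := by rw [Q, QB_zero]

lemma β_zero : β r a Ac 0 = a := by rw [β, QB_zero]

lemma QB_succ_eq (s : ℕ) :
    QB r a Ac (s+1) =
      (Matrix.of (fun i j => if i = j then 0 else Mdef r a Ac s i j / (a i - a j)),
        fun i => Mdef r a Ac s i i) := by
  rw [QB]
  have hM : (∑ j ∈ (Finset.range (s+1)).attach, (QB r a Ac (j:ℕ)).1 * Ac (s+1-(j:ℕ)))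
      - (∑ t ∈ (Finset.range s).attach,
          Matrix.diagonal ((QB r a Ac ((t:ℕ)+1)).2) * (QB r a Ac (s-(t:ℕ))).1)
      - (if r ≤ s+1 then ((s+1-r : ℕ) : k) • (QB r a Ac (s-(r-1))).1 else 0)
      = Mdef r a Ac s := by
    rw [Mdef]
    rw [← Finset.sum_attach (Finset.range (s+1)) (fun j => Q r a Ac j * Ac (s+1-j)),
      ← Finset.sum_attach (Finset.range s)
        (fun t => Matrix.diagonal (β r a Ac (t+1)) * Q r a Ac (s-t))]
    rfl
  rw [hM]

lemma Q_succ (s : ℕ) :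
    Q r a Ac (s+1) =
      Matrix.of (fun i j => if i = j then 0 else Mdef r a Ac s i j / (a i - a j)) := by
  rw [Q, QB_succ_eq]

lemma β_succ (s : ℕ) :
    β r a Ac (s+1) = fun i => Mdef r a Ac s i i := by
  rw [β, QB_succ_eq]

end Rec

section Key

variable {k : Type*} [Field k] {n : ℕ} (r : ℕ) (a : Fin n → k) (Ac : ℕ → Matrix (Fin n) (Fin n) k)

lemma comm_lemma (ha : ∀ i j : Fin n, i ≠ j → a i ≠ a j) (s : ℕ) :
    Matrix.diagonal a * Q r a Ac (s+1) - Q r a Ac (s+1) * Matrix.diagonal a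
      + Matrix.diagonal (β r a Ac (s+1)) = Mdef r a Ac s := by
  ext i j
  rw [Q_succ, β_succ]
  by_cases hij : i = j
  · subst hij
    simp [Matrix.diagonal_mul, Matrix.mul_diagonal, Matrix.diagonal_apply_eq]
  · have hne : a i - a j ≠ 0 := sub_ne_zero.mpr (ha i j hij)
    simp only [Matrix.sub_apply, Matrix.add_apply, Matrix.diagonal_mul, Matrix.mul_diagonal,
      Matrix.of_apply, Matrix.diagonal_apply_ne _ hij, if_neg hij, add_zero]
    field_simp

lemma key (hr : 1 ≤ r) (hAc0 : Ac 0 = Matrix.diagonal a)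
    (ha : ∀ i j : Fin n, i ≠ j → a i ≠ a j) (s : ℕ) :
    (∑ t ∈ Finset.range (s+1), Matrix.diagonal (β r a Ac t) * Q r a Ac (s-t))
      + (if r ≤ s then ((s-r : ℕ) : k) • Q r a Ac (s-r) else 0)
    = ∑ j ∈ Finset.range (s+1), Q r a Ac j * Ac (s-j) := by
  cases s with
  | zero =>
    rw [if_neg (by omega), Finset.sum_range_one, Finset.sum_range_one]
    simp [Q_zero, β_zero, hAc0]
  | succ s =>
    have hco := comm_lemma r a Ac ha s
    rw [Mdef] at hco
    have hidx : s - (r-1) = s + 1 - r := by omega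
    rw [hidx] at hco
    rw [Finset.sum_range_succ' (fun t => Matrix.diagonal (β r a Ac t) * Q r a Ac (s+1-t)),
      Finset.sum_range_succ (fun j => Q r a Ac j * Ac (s+1-j))]
    simp only [Nat.succ_sub_succ, Nat.sub_zero, Nat.sub_self]
    rw [Finset.sum_range_succ (fun t => Matrix.diagonal (β r a Ac (t+1)) * Q r a Ac (s-t))]
    rw [Nat.sub_self, Q_zero, β_zero, hAc0, mul_one]
    set te := (if r ≤ s + 1 then ((s+1-r : ℕ) : k) • Q r a Ac (s+1-r) else 0) with hte
    rw [← sub_eq_zero] at hco ⊢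
    rw [← hco]
    abel

end Key

section PS

variable {k : Type*} [Field k] {n : ℕ} (r : ℕ) (a : Fin n → k) (Ac : ℕ → Matrix (Fin n) (Fin n) k)

def qps (i j : Fin n) : PowerSeries k := PowerSeries.mk fun s => Q r a Ac s i j

def bps (i : Fin n) : PowerSeries k := PowerSeries.mk fun s => β r a Ac s i

def Aps (l j : Fin n) : PowerSeries k := PowerSeries.mk fun s => Ac s l j

lemma P1 (hr : 1 ≤ r) (hAc0 : Ac 0 = Matrix.diagonal a)
    (ha : ∀ i j : Fin n, i ≠ j → a i ≠ a j) (i j : Fin n) :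
    bps r a Ac i * qps r a Ac i j + PowerSeries.X ^ r * Tpow (qps r a Ac i j)
      = ∑ l, qps r a Ac i l * Aps Ac l j := by
  ext s
  have hk := key r a Ac hr hAc0 ha s
  have hk2 : ((∑ t ∈ Finset.range (s+1), Matrix.diagonal (β r a Ac t) * Q r a Ac (s-t))
      + (if r ≤ s then ((s-r : ℕ) : k) • Q r a Ac (s-r) else 0)) i j
    = (∑ t ∈ Finset.range (s+1), Q r a Ac t * Ac (s-t)) i j := by rw [hk]
  simp only [Matrix.add_apply, Matrix.sum_apply, Matrix.diagonal_mul, Matrix.smul_apply,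
    Matrix.zero_apply, smul_eq_mul, apply_ite (fun M : Matrix (Fin n) (Fin n) k => M i j),
    Matrix.zero_apply] at hk2
  simp only [Matrix.mul_apply] at hk2
  rw [map_add, PowerSeries.coeff_mul, Finset.Nat.sum_antidiagonal_eq_sum_range_succ_mk,
    PowerSeries.coeff_X_pow_mul', map_sum]
  simp only [qps, bps, Aps, PowerSeries.coeff_mk, coeff_Tpow]
  rw [show (∑ l, PowerSeries.coeff s (PowerSeries.mk (fun s => Q r a Ac s i l)
        * PowerSeries.mk (fun s => Ac s l j))) =
      ∑ l, ∑ t ∈ Finset.range (s+1), Q r a Ac t i l * Ac (s-t) l j from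
    Finset.sum_congr rfl fun l _ => by
      rw [PowerSeries.coeff_mul, Finset.Nat.sum_antidiagonal_eq_sum_range_succ_mk]
      simp only [PowerSeries.coeff_mk]]
  rw [Finset.sum_comm]
  exact hk2

end PS

section U

variable {k : Type*} [Field k]

def urec (c : ℕ → k) : ℕ → k
  | 0 => 1
  | (s+1) => ((s+1 : ℕ) : k)⁻¹ *
      ∑ t ∈ (Finset.range (s+1)).attach, c ((t:ℕ)+1) * urec c (s-(t:ℕ))
  termination_by s => s
  decreasing_by have := t.2; simp only [Finset.mem_range] at this; omega

def ups (c : ℕ → k) : PowerSeries k := PowerSeries.mk (urec c)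

lemma urec_zero (c : ℕ → k) : urec c 0 = 1 := by rw [urec]

lemma urec_succ (c : ℕ → k) (s : ℕ) :
    urec c (s+1) = ((s+1 : ℕ) : k)⁻¹ * ∑ t ∈ Finset.range (s+1), c (t+1) * urec c (s-t) := by
  rw [urec, ← Finset.sum_attach (Finset.range (s+1)) (fun t => c (t+1) * urec c (s-t))]

lemma P2 [CharZero k] (c : ℕ → k) (hc0 : c 0 = 0) :
    Tpow (ups c) = PowerSeries.mk c * ups c := by
  ext s
  rw [coeff_Tpow, PowerSeries.coeff_mul, Finset.Nat.sum_antidiagonal_eq_sum_range_succ_mk]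
  simp only [ups, PowerSeries.coeff_mk]
  cases s with
  | zero => simp [hc0]
  | succ s =>
    rw [Finset.sum_range_succ' (fun t => c t * urec c (s+1-t))]
    simp only [Nat.succ_sub_succ, hc0, zero_mul, add_zero, Nat.sub_zero]
    rw [urec_succ, ← mul_assoc,
      mul_inv_cancel₀ (Nat.cast_ne_zero.mpr (Nat.succ_ne_zero s)), one_mul]

lemma constantCoeff_ups (c : ℕ → k) : PowerSeries.constantCoeff (ups c) = 1 := by
  simp [ups, urec_zero]

end U

/-- if `A = Σ_{i ≥ −r} A_i z^i ∈ z^{−r}·gl_n(k[[z]])` has diagonal leading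
term `A_{−r}` with pairwise distinct diagonal entries, then there is `p ∈ GL_n(k[[z]])`
with `p ≡ Iₙ (mod z)` such that the gauge transform `p·A·p⁻¹ − τ(p)·p⁻¹` is diagonal,
supported in degrees `−r, …, 0`, with leading coefficient `A_{−r}`. -/
theorem stmt11 [IsAlgClosed k] [CharZero k] {n : ℕ} (r : ℕ) (hr : 1 ≤ r)
    (A : Matrix (Fin n) (Fin n) (LaurentSeries k))
    (hA : ∀ i j, ∀ m : ℤ, m < -(r : ℤ) → (A i j).coeff m = 0)
    (hdiag : ∀ i j, i ≠ j → (A i j).coeff (-(r : ℤ)) = 0)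
    (hdist : ∀ i j, i ≠ j → (A i i).coeff (-(r : ℤ)) ≠ (A j j).coeff (-(r : ℤ))) :
    ∃ p B : Matrix (Fin n) (Fin n) (LaurentSeries k),
      B = p * A * p⁻¹ - (p.map tauF) * p⁻¹ ∧
      IsUnit p.det ∧
      -- p ≡ Iₙ (mod z), entries of p in k[[z]]
      (∀ i j, ∀ m : ℤ, m ≤ 0 → ((p - 1) i j).coeff m = 0) ∧
      -- B is diagonal ...
      (∀ i j, i ≠ j → B i j = 0) ∧
      -- ... supported in degrees −r, …, 0 (so B = Σ_{i=−r}^{0} D_i z^i with D_i diagonal) ...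
      (∀ i, ∀ m : ℤ, (m < -(r : ℤ) ∨ 0 < m) → (B i i).coeff m = 0) ∧
      -- ... with D_{−r} = A_{−r}
      (∀ i, (B i i).coeff (-(r : ℤ)) = (A i i).coeff (-(r : ℤ))) := by
  classical
  set Φ : PowerSeries k →+* LaurentSeries k := HahnSeries.ofPowerSeries ℤ k with hΦ
  set ℓ : LaurentSeries k := HahnSeries.single (-(r:ℤ)) (1:k) with hℓ
  set a : Fin n → k := fun i => (A i i).coeff (-(r : ℤ)) with ha_def
  set Ac : ℕ → Matrix (Fin n) (Fin n) k :=
    fun m => Matrix.of fun l j => (A l j).coeff ((m : ℤ) - r) with hAc_def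
  have hAc0 : Ac 0 = Matrix.diagonal a := by
    ext l j
    by_cases hlj : l = j
    · subst hlj
      simp only [hAc_def, Matrix.of_apply, Matrix.diagonal_apply_eq, ha_def,
        Nat.cast_zero, zero_sub]
    · simp only [hAc_def, Matrix.of_apply, Matrix.diagonal_apply_ne _ hlj,
        Nat.cast_zero, zero_sub]
      exact hdiag l j hlj
  have ha : ∀ i j : Fin n, i ≠ j → a i ≠ a j := fun i j hij => hdist i j hij
  set c : Fin n → ℕ → k := fun i m => if m = 0 then 0 else β r a Ac (m + r) i with hc_def
  have hc0 : ∀ i, c i 0 = 0 := fun i => by simp [hc_def]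
  -- the gauge matrix and the diagonal normal form
  set Pps : Matrix (Fin n) (Fin n) (PowerSeries k) :=
    Matrix.of (fun i j => ups (c i) * qps r a Ac i j) with hPps
  set p : Matrix (Fin n) (Fin n) (LaurentSeries k) := Pps.map Φ with hp
  set B : Matrix (Fin n) (Fin n) (LaurentSeries k) :=
    Matrix.diagonal (fun i =>
      ℓ * Φ (bps r a Ac i - PowerSeries.X ^ r * PowerSeries.mk (c i))) with hB
  -- A in terms of Φ
  have hA_eq : ∀ l j, A l j = ℓ * Φ (Aps Ac l j) := by
    intro l j
    ext m
    rw [hℓ, single_mul_coeff, hΦ, ofPS_coeff]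
    split_ifs with h
    · rw [Aps, PowerSeries.coeff_mk, hAc_def]
      simp only [Matrix.of_apply]
      congr 1
      omega
    · exact hA l j m (by omega)
  -- invertibility
  have hPdet : IsUnit Pps.det := by
    rw [PowerSeries.isUnit_iff_constantCoeff]
    rw [RingHom.map_det (PowerSeries.constantCoeff (R := k)) Pps]
    have hm1 : (PowerSeries.constantCoeff (R := k)).mapMatrix Pps = 1 := by
      ext i j
      simp only [RingHom.mapMatrix_apply, Matrix.map_apply, hPps, Matrix.of_apply,
        _root_.map_mul, constantCoeff_ups, one_mul, qps, PowerSeries.constantCoeff_mk]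
      rw [Q_zero]
    rw [hm1, Matrix.det_one]
    exact isUnit_one
  have hdet : IsUnit p.det := by
    have : p.det = Φ Pps.det := by
      rw [RingHom.map_det, hp]; rfl
    rw [this]
    exact hPdet.map Φ
  -- the fundamental identity
  have hX : ℓ * Φ (PowerSeries.X ^ r) = 1 := single_mul_X_pow r
  have hBp : B * p = p * A - p.map tauF := by
    refine Matrix.ext fun i j => ?_
    rw [Matrix.sub_apply, hB, Matrix.diagonal_mul, Matrix.mul_apply, Matrix.map_apply,
      hp, Matrix.map_apply, hPps]
    simp only [Matrix.of_apply, Matrix.map_apply]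
    have hsum : (∑ l, Φ (ups (c i) * qps r a Ac i l) * A l j)
        = ℓ * Φ (ups (c i) * ∑ l, qps r a Ac i l * Aps Ac l j) := by
      rw [_root_.map_mul, map_sum, Finset.mul_sum, Finset.mul_sum]
      refine Finset.sum_congr rfl fun l _ => ?_
      rw [hA_eq l j, _root_.map_mul, _root_.map_mul]
      ring
    rw [hsum, ← P1 r a Ac hr hAc0 ha i j, tauF_ofPS, Tpow_mul, P2 (c i) (hc0 i)]
    simp only [_root_.map_mul, map_add, map_sub]
    linear_combination (-(Φ (PowerSeries.mk (c i)) * Φ (ups (c i)) * Φ (qps r a Ac i j)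
      + Φ (ups (c i)) * Φ (Tpow (qps r a Ac i j)))) * hX
  refine ⟨p, B, ?_, hdet, ?_, ?_, ?_, ?_⟩
  · have h1 : p * p⁻¹ = 1 := Matrix.mul_nonsing_inv _ hdet
    calc B = B * 1 := by rw [mul_one]
      _ = B * (p * p⁻¹) := by rw [h1]
      _ = (B * p) * p⁻¹ := by rw [Matrix.mul_assoc]
      _ = (p * A - p.map tauF) * p⁻¹ := by rw [hBp]
      _ = p * A * p⁻¹ - (p.map tauF) * p⁻¹ := by rw [Matrix.sub_mul]
  · -- p ≡ 1 mod z
    intro i j m hm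
    rw [Matrix.sub_apply, HahnSeries.coeff_sub, hp, Matrix.map_apply, hΦ, ofPS_coeff]
    rcases lt_or_eq_of_le hm with hlt | heq
    · rw [if_neg (by omega), Matrix.one_apply]
      by_cases hij : i = j
      · rw [if_pos hij, HahnSeries.coeff_one, if_neg (by omega)]; ring
      · rw [if_neg hij]; simp
    · subst heq
      rw [if_pos le_rfl]
      have hcc : (PowerSeries.coeff (0:ℤ).toNat) (Pps i j)
          = (1 : Matrix (Fin n) (Fin n) k) i j := by
        show PowerSeries.coeff 0 (Pps i j) = _
        rw [hPps]
        simp only [Matrix.of_apply]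
        rw [PowerSeries.coeff_zero_eq_constantCoeff_apply, _root_.map_mul, constantCoeff_ups,
          one_mul, qps, PowerSeries.constantCoeff_mk, Q_zero]
      rw [hcc, Matrix.one_apply, Matrix.one_apply]
      by_cases hij : i = j
      · rw [if_pos hij, if_pos hij, HahnSeries.coeff_one, if_pos rfl]; ring
      · rw [if_neg hij, if_neg hij]; simp
  · intro i j hij
    rw [hB]
    exact Matrix.diagonal_apply_ne _ hij
  · intro i m hm
    rw [hB, Matrix.diagonal_apply_eq, hℓ, single_mul_coeff, hΦ, ofPS_coeff]
    rcases hm with hm | hm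
    · rw [if_neg (by omega)]
    · rw [if_pos (by omega)]
      set s : ℕ := (m + (r:ℤ)).toNat with hs
      have hrs : r < s := by omega
      rw [map_sub, PowerSeries.coeff_X_pow_mul', if_pos (le_of_lt hrs)]
      simp only [bps, PowerSeries.coeff_mk, hc_def]
      rw [if_neg (by omega)]
      have : s - r + r = s := by omega
      rw [this, sub_self]
  · intro i
    rw [hB, Matrix.diagonal_apply_eq, hℓ, single_mul_coeff, hΦ, ofPS_coeff]
    rw [if_pos (by omega)]
    have h0 : ((-(r:ℤ) + r).toNat) = 0 := by omega
    rw [h0, map_sub, PowerSeries.coeff_X_pow_mul', if_neg (by omega)]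
    simp only [bps, PowerSeries.coeff_mk, sub_zero]
    rw [β_zero]
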